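/- For every odd k and graph K: K is multiplicative if and only if Ω_k(K) is multiplicative. -/

import Mathlib

/-- A finite graph: symmetric edge relation, loops allowed. -/
structure FinGraph where
  V : Type
  Adj : V → V → Prop
  symm : ∀ {u v : V}, Adj u v → Adj v u
  [fin : Finite V]

attribute [instance] FinGraph.fin

/-- Existence of a graph homomorphism. -/
def FinGraph.Hom (G H : FinGraph) : Prop :=
  ∃ f : G.V → H.V, ∀ {u v : G.V}, G.Adj u v → H.Adj (f u) (f v)

/-- Homomorphic equivalence. -/
def FinGraph.HomEquiv (G H : FinGraph) : Prop := G.Hom H ∧ H.Hom G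

/-- Tensor (categorical) product of graphs. -/
def FinGraph.prod (G H : FinGraph) : FinGraph where
  V := G.V × H.V
  Adj := fun a b => G.Adj a.1 b.1 ∧ H.Adj a.2 b.2
  symm := fun h => ⟨G.symm h.1, H.symm h.2⟩

/-- A walk of length `n` from `u` to `v`. -/
def FinGraph.Walk (G : FinGraph) (n : ℕ) (u v : G.V) : Prop :=
  ∃ w : ℕ → G.V, w 0 = u ∧ w n = v ∧ ∀ i < n, G.Adj (w i) (w (i+1))

/-- The `k`-th power graph `Γ_k(G)`. -/
def FinGraph.pow (G : FinGraph) (k : ℕ) : FinGraph where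
  V := G.V
  Adj := fun u v => G.Walk k u v
  symm := by
    rintro u v ⟨w, h0, hk, hadj⟩
    refine ⟨fun i => w (k - i), by simpa using hk, by simpa using h0, fun i hi => ?_⟩
    have h1 : k - (i+1) + 1 = k - i := by omega
    have h2 := hadj (k - (i+1)) (by omega)
    rw [h1] at h2
    exact G.symm h2

/-- Raw vertices for the `k`-subdivision: original vertices plus internal path
vertices `(u,v,i)` with `uv` an edge and `0 < i < k`. -/
abbrev FinGraph.SubdivRaw (G : FinGraph) (k : ℕ) : Type :=
  G.V ⊕ {p : G.V × G.V × Fin (k+1) // G.Adj p.1 p.2.1 ∧ 0 < p.2.2.val ∧ p.2.2.val < k}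

/-- Identification `(u,v,i) ~ (v,u,k-i)` of internal vertices. -/
def FinGraph.subdivRel (G : FinGraph) (k : ℕ) : G.SubdivRaw k → G.SubdivRaw k → Prop :=
  fun a b => ∃ p q, a = Sum.inr p ∧ b = Sum.inr q ∧
    p.1.1 = q.1.2.1 ∧ p.1.2.1 = q.1.1 ∧ p.1.2.2.val + q.1.2.2.val = k

/-- Adjacency on raw subdivision vertices. -/
def FinGraph.subdivAdjRaw (G : FinGraph) (k : ℕ) : G.SubdivRaw k → G.SubdivRaw k → Prop := fun a b =>
  match a, b with
  | .inl u, .inl v => k = 1 ∧ G.Adj u v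
  | .inl u, .inr p => (p.1.1 = u ∧ p.1.2.2.val = 1) ∨ (p.1.2.1 = u ∧ p.1.2.2.val = k - 1)
  | .inr p, .inl u => (p.1.1 = u ∧ p.1.2.2.val = 1) ∨ (p.1.2.1 = u ∧ p.1.2.2.val = k - 1)
  | .inr p, .inr q =>
      (p.1.1 = q.1.1 ∧ p.1.2.1 = q.1.2.1 ∧
        (p.1.2.2.val + 1 = q.1.2.2.val ∨ q.1.2.2.val + 1 = p.1.2.2.val)) ∨
      (p.1.1 = q.1.2.1 ∧ p.1.2.1 = q.1.1 ∧
        (p.1.2.2.val + q.1.2.2.val = k + 1 ∨ p.1.2.2.val + q.1.2.2.val = k - 1))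

/-- The `k`-subdivision `Λ_k(G)`: every edge replaced by a path with `k` edges. -/
def FinGraph.subdiv (G : FinGraph) (k : ℕ) : FinGraph where
  V := Quot (G.subdivRel k)
  Adj := fun x y => ∃ a b, Quot.mk _ a = x ∧ Quot.mk _ b = y ∧
    (G.subdivAdjRaw k a b ∨ G.subdivAdjRaw k b a)
  symm := fun ⟨a, b, ha, hb, h⟩ => ⟨b, a, hb, ha, h.symm⟩

/-- `A` joined to `B`: every vertex of `A` adjacent to every vertex of `B`. -/
def FinGraph.Join (G : FinGraph) (A B : Set G.V) : Prop := ∀ a ∈ A, ∀ b ∈ B, G.Adj a b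

/-- Vertices of `Ω_{2ℓ+1}(G)`: tuples `(A_0, …, A_ℓ)` of vertex subsets with `A_0`
a singleton and `A_{i-1}` joined to `A_i`. -/
abbrev FinGraph.OmegaVert (G : FinGraph) (l : ℕ) : Type :=
  {A : Fin (l+1) → Set G.V //
    (∃ v, A 0 = {v}) ∧ ∀ i : Fin l, G.Join (A i.castSucc) (A i.succ)}

/-- The graph `Ω_{2ℓ+1}(G)`, right adjoint to the `(2ℓ+1)`-st power functor. -/
def FinGraph.omega (G : FinGraph) (l : ℕ) : FinGraph where
  V := G.OmegaVert l
  Adj := fun A B =>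
    (∀ i : Fin l, A.1 i.castSucc ⊆ B.1 i.succ ∧ B.1 i.castSucc ⊆ A.1 i.succ) ∧
    G.Join (A.1 (Fin.last l)) (B.1 (Fin.last l))
  symm := fun {A B} h =>
    ⟨fun i => ⟨(h.1 i).2, (h.1 i).1⟩, fun b hb a ha => G.symm (h.2 a ha b hb)⟩

/-- A multiplicative graph. -/
def FinGraph.Multiplicative (K : FinGraph) : Prop :=
  ∀ G H : FinGraph, (G.prod H).Hom K → G.Hom K ∨ H.Hom K

/-- A (thin) graph functor. -/
def IsGraphFunctor (F : FinGraph → FinGraph) : Prop :=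
  ∀ G H : FinGraph, G.Hom H → (F G).Hom (F H)

namespace FinGraph

theorem Hom.id (G : FinGraph) : G.Hom G := ⟨fun v => v, fun h => h⟩

theorem Hom.trans {G H K : FinGraph} (h1 : G.Hom H) (h2 : H.Hom K) : G.Hom K := by
  obtain ⟨f, hf⟩ := h1; obtain ⟨g, hg⟩ := h2
  exact ⟨g ∘ f, fun h => hg (hf h)⟩

theorem walk_zero {G : FinGraph} (u : G.V) : G.Walk 0 u u :=
  ⟨fun _ => u, rfl, rfl, fun i hi => absurd hi (by omega)⟩

theorem walk_zero_iff {G : FinGraph} {u v : G.V} : G.Walk 0 u v ↔ u = v := by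
  constructor
  · rintro ⟨w, h0, hk, -⟩; rw [← h0, hk]
  · rintro rfl; exact walk_zero u

theorem Walk.rev {G : FinGraph} {n : ℕ} {u v : G.V} (h : G.Walk n u v) : G.Walk n v u :=
  (G.pow n).symm (u := u) (v := v) h

theorem Walk.trans {G : FinGraph} {m n : ℕ} {u v w : G.V}
    (h1 : G.Walk m u v) (h2 : G.Walk n v w) : G.Walk (m + n) u w := by
  obtain ⟨a, ha0, ham, haadj⟩ := h1
  obtain ⟨b, hb0, hbn, hbadj⟩ := h2
  refine ⟨fun i => if i < m then a i else b (i - m), ?_, ?_, ?_⟩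
  · by_cases h : 0 < m
    · simp [h, ha0]
    · have hm : m = 0 := by omega
      subst hm; simp only [show ¬ (0:ℕ) < 0 by omega, if_false, hb0, ← ham, ha0]
  · have : ¬ (m + n < m) := by omega
    simp [this, hbn]
  · intro i hi
    rcases lt_trichotomy (i+1) m with h | h | h
    · simp only [if_pos (by omega : i < m), if_pos h]
      exact haadj i (by omega)
    · have hb0' : b (i + 1 - m) = a (i + 1) := by
        rw [show i + 1 - m = 0 by omega, hb0, ← ham, h]
      simp only [if_pos (by omega : i < m), if_neg (by omega : ¬ (i+1 < m)), hb0']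
      exact haadj i (by omega)
    · by_cases him : i < m
      · omega
      · simp only [if_neg him, if_neg (by omega : ¬ (i+1 < m)),
          show i + 1 - m = (i - m) + 1 by omega]
        exact hbadj (i - m) (by omega)

theorem Walk.one {G : FinGraph} {u v : G.V} (h : G.Adj u v) : G.Walk 1 u v := by
  refine ⟨fun i => if i = 0 then u else v, by simp, by simp, ?_⟩
  intro i hi
  simp only [show i = 0 by omega]
  simpa using h

theorem Walk.cons {G : FinGraph} {n : ℕ} {u v w : G.V} (h : G.Adj u v) (hw : G.Walk n v w) :
    G.Walk (n + 1) u w := by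
  have := (Walk.one h).trans hw
  rwa [Nat.add_comm] at this

theorem Walk.pad2 {G : FinGraph} {n : ℕ} {u v : G.V} (hn : 1 ≤ n) (h : G.Walk n u v) :
    G.Walk (n + 2) u v := by
  obtain ⟨a, h0, hk, hadj⟩ := h
  refine ⟨fun i => if i = 0 then u else if i = 1 then a 1 else a (i - 2), by simp, ?_, ?_⟩
  · simp only [if_neg (by omega : ¬ (n+2 = 0)), if_neg (by omega : ¬ (n+2 = 1))]
    simpa using hk
  · intro i hi
    rcases lt_trichotomy i 1 with h1 | h1 | h1
    · simp only [show i = 0 by omega]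
      simpa [← h0] using hadj 0 hn
    · subst h1
      simp only [if_neg (by omega : ¬ (1:ℕ) = 0), if_pos rfl,
        if_neg (by omega : ¬ (2:ℕ) = 0), if_neg (by omega : ¬ (2:ℕ) = 1),
        show 2 - 2 = 0 by omega, h0]
      exact G.symm (h0 ▸ hadj 0 hn)
    · simp only [if_neg (by omega : ¬ i = 0), if_neg (by omega : ¬ i = 1),
        if_neg (by omega : ¬ i + 1 = 0), if_neg (by omega : ¬ i + 1 = 1),
        show i + 1 - 2 = (i - 2) + 1 by omega]
      exact hadj (i - 2) (by omega)

theorem Walk.pad {G : FinGraph} {m n : ℕ} {u v : G.V} (h1 : 1 ≤ m) (hle : m ≤ n)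
    (hpar : m % 2 = n % 2) (h : G.Walk m u v) : G.Walk n u v := by
  obtain ⟨c, hc⟩ : ∃ c, n = m + 2 * c := ⟨(n - m) / 2, by omega⟩
  subst hc
  clear hle hpar
  induction c with
  | zero => simpa using h
  | succ c ih =>
    have := ih.pad2 (by omega)
    have e : m + 2 * c + 2 = m + 2 * (c + 1) := by omega
    rwa [e] at this

theorem Walk.map {G K : FinGraph} {f : G.V → K.V} (hf : ∀ {a b : G.V}, G.Adj a b → K.Adj (f a) (f b))
    {n : ℕ} {u v : G.V} (h : G.Walk n u v) : K.Walk n (f u) (f v) := by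
  obtain ⟨w, h0, hk, hadj⟩ := h
  exact ⟨fun i => f (w i), by simp only []; rw [h0], by simp only []; rw [hk], fun i hi => hf (hadj i hi)⟩

end FinGraph
namespace FinGraph

/-- Common-neighborhood operator: all vertices adjacent to everything in `S`. -/
def bot (G : FinGraph) (S : Set G.V) : Set G.V := {w | ∀ x ∈ S, G.Adj x w}

theorem join_single {G : FinGraph} {a b : G.V} (h : G.Adj a b) : G.Join {a} {b} := by
  intro x hx y hy
  rw [Set.mem_singleton_iff] at hx hy
  rw [hx, hy]; exact h

theorem Join.symm {G : FinGraph} {A B : Set G.V} (h : G.Join A B) : G.Join B A :=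
  fun b hb a ha => G.symm (h a ha b hb)

theorem join_bot (G : FinGraph) (S : Set G.V) : G.Join S (G.bot S) :=
  fun a ha b hb => hb a ha

theorem subset_bot_bot (G : FinGraph) (S : Set G.V) : S ⊆ G.bot (G.bot S) :=
  fun x hx y hy => G.symm (hy x hx)

theorem bot_iterate_join (G : FinGraph) (S : Set G.V) (j : ℕ) :
    G.Join (G.bot^[j] S) (G.bot^[j+1] S) := by
  rw [Function.iterate_succ_apply']
  exact G.join_bot _

theorem bot_iterate_subset (G : FinGraph) (S : Set G.V) (j : ℕ) :
    G.bot^[j] S ⊆ G.bot^[j+2] S := by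
  rw [Function.iterate_succ_apply', Function.iterate_succ_apply']
  exact G.subset_bot_bot _

/-- Alternating singleton sets. -/
def altSet (G : FinGraph) (u v : G.V) (m : ℕ) : Set G.V := if m % 2 = 0 then {u} else {v}

theorem altSet_congr (G : FinGraph) (u v : G.V) {m m' : ℕ} (h : m % 2 = m' % 2) :
    G.altSet u v m = G.altSet u v m' := by
  unfold altSet; rw [h]

theorem altSet_swap (G : FinGraph) (u v : G.V) {m m' : ℕ} (h : m % 2 ≠ m' % 2) :
    G.altSet u v m = G.altSet v u m' := by
  unfold altSet
  rcases Nat.mod_two_eq_zero_or_one m with h1 | h1 <;>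
    rcases Nat.mod_two_eq_zero_or_one m' with h2 | h2 <;> simp [h1, h2] at h ⊢

/-- Levels of the walk-vertices in `Ω(G)`: thin alternating singletons below `t`,
`⊥`-iterates of `{u}` from level `t` on. -/
def omegaLevel (G : FinGraph) (u v : G.V) (t i : ℕ) : Set G.V :=
  if i < t then G.altSet u v (t - i) else G.bot^[i - t] {u}

theorem omegaLevel_join (G : FinGraph) {u v : G.V} (h : G.Adj u v) (t i : ℕ) :
    G.Join (G.omegaLevel u v t i) (G.omegaLevel u v t (i+1)) := by
  unfold omegaLevel
  rcases lt_trichotomy (i+1) t with h1 | h1 | h1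
  · rw [if_pos (by omega : i < t), if_pos h1]
    unfold altSet
    rcases Nat.mod_two_eq_zero_or_one (t - i) with h2 | h2 <;>
      rw [h2, show (t - (i+1)) % 2 = 1 - (t - i) % 2 by omega, h2]
    · simpa using G.join_single h
    · simpa using G.join_single (G.symm h)
  · rw [if_pos (by omega : i < t), if_neg (by omega : ¬ (i+1 < t)),
      show t - i = 1 by omega, show i + 1 - t = 0 by omega]
    simp only [Function.iterate_zero_apply]
    unfold altSet
    simpa using G.join_single (G.symm h)
  · rw [if_neg (by omega : ¬ (i < t)), if_neg (by omega : ¬ (i+1 < t)),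
      show i + 1 - t = (i - t) + 1 by omega]
    exact G.bot_iterate_join _ _

/-- The vertices along the unit walk in `Ω(G)`. -/
def omegaD (G : FinGraph) (l : ℕ) (u v : G.V) (h : G.Adj u v) (t : ℕ) : (G.omega l).V := by
  refine ⟨fun i => G.omegaLevel u v t i.val, ?_, ?_⟩
  · unfold omegaLevel altSet
    simp only [Fin.val_zero]
    by_cases h0 : 0 < t
    · rcases Nat.mod_two_eq_zero_or_one t with h2 | h2
      · exact ⟨u, by simp [h0, h2]⟩
      · exact ⟨v, by simp [h0, h2]⟩
    · exact ⟨u, by simp [h0, show (0:ℕ) - t = 0 by omega]⟩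
  · intro i
    exact G.omegaLevel_join h t i.val

/-- The canonical `Ω(G)`-vertex at `v`: `⊥`-iterates of `{v}`. -/
def omegaA (G : FinGraph) (l : ℕ) (v : G.V) : (G.omega l).V :=
  ⟨fun i => G.bot^[i.val] {v}, ⟨v, by simp⟩, fun i => G.bot_iterate_join _ i.val⟩

theorem omegaD_zero (G : FinGraph) (l : ℕ) (u v : G.V) (h : G.Adj u v) :
    G.omegaD l u v h 0 = G.omegaA l u := by
  apply Subtype.ext
  funext i
  simp [omegaD, omegaA, omegaLevel]

end FinGraph
namespace FinGraph

theorem omegaLevel_shift (G : FinGraph) (u v : G.V) (t i : ℕ) :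
    G.omegaLevel u v (t+1) (i+1) = G.omegaLevel u v t i := by
  unfold omegaLevel
  rcases lt_or_ge i t with h | h
  · rw [if_pos (by omega), if_pos h, show t + 1 - (i + 1) = t - i by omega]
  · rw [if_neg (by omega), if_neg (by omega), show i + 1 - (t + 1) = i - t by omega]

theorem omegaLevel_back (G : FinGraph) {u v : G.V} (h : G.Adj u v) (t i : ℕ) :
    G.omegaLevel u v (t+1) i ⊆ G.omegaLevel u v t (i+1) := by
  unfold omegaLevel
  rcases lt_trichotomy i t with h1 | h1 | h1
  · rw [if_pos (by omega)]
    rcases lt_or_ge (i+1) t with h2 | h2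
    · rw [if_pos h2, G.altSet_congr u v (show (t+1-i) % 2 = (t-(i+1)) % 2 by omega)]
    · have ht : t = i + 1 := by omega
      rw [if_neg (by omega), show i + 1 - t = 0 by omega]
      simp only [Function.iterate_zero_apply]
      rw [G.altSet_congr u v (show (t+1-i) % 2 = 0 % 2 by omega)]
      unfold altSet; simp
  · subst h1
    rw [if_pos (by omega), if_neg (by omega), show i + 1 - i = 1 by omega]
    have : G.altSet u v 1 = {v} := by unfold altSet; simp
    rw [this]
    intro x hx
    rw [Set.mem_singleton_iff] at hx
    subst hx
    simp only [Function.iterate_one]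
    intro y hy
    rw [Set.mem_singleton_iff] at hy
    subst hy; exact h
  · rw [if_neg (by omega), if_neg (by omega),
      show i + 1 - t = (i - (t+1)) + 2 by omega]
    exact G.bot_iterate_subset _ _

theorem omegaD_step (G : FinGraph) (l : ℕ) {u v : G.V} (h : G.Adj u v) {t : ℕ} (ht : t + 1 ≤ l) :
    (G.omega l).Adj (G.omegaD l u v h t) (G.omegaD l u v h (t+1)) := by
  constructor
  · intro i
    constructor
    · show G.omegaLevel u v t i.castSucc.val ⊆ G.omegaLevel u v (t+1) i.succ.val
      rw [Fin.coe_castSucc, Fin.val_succ, omegaLevel_shift]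
    · show G.omegaLevel u v (t+1) i.castSucc.val ⊆ G.omegaLevel u v t i.succ.val
      rw [Fin.coe_castSucc, Fin.val_succ]
      exact G.omegaLevel_back h t i.val
  · show G.Join (G.omegaLevel u v t (Fin.last l).val) (G.omegaLevel u v (t+1) (Fin.last l).val)
    simp only [Fin.val_last]
    unfold omegaLevel
    rw [if_neg (by omega), if_neg (by omega), show l - t = (l - (t+1)) + 1 by omega]
    exact (G.bot_iterate_join _ _).symm

theorem omegaLevel_thin (G : FinGraph) (u v : G.V) {j l : ℕ} (hj : j ≤ l) :
    G.omegaLevel u v l j = G.altSet u v (l - j) := by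
  unfold omegaLevel
  rcases lt_or_eq_of_le hj with h1 | h1
  · rw [if_pos h1]
  · subst h1
    rw [if_neg (by omega), show j - j = 0 by omega]
    unfold altSet; simp

theorem omegaD_mid (G : FinGraph) (l : ℕ) {u v : G.V} (h : G.Adj u v) :
    (G.omega l).Adj (G.omegaD l u v h l) (G.omegaD l v u (G.symm h) l) := by
  constructor
  · intro i
    constructor
    · show G.omegaLevel u v l i.castSucc.val ⊆ G.omegaLevel v u l i.succ.val
      rw [Fin.coe_castSucc, Fin.val_succ, G.omegaLevel_thin u v (by omega : i.val ≤ l),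
        G.omegaLevel_thin v u (by omega : i.val + 1 ≤ l),
        G.altSet_swap u v (show (l - i.val) % 2 ≠ (l - (i.val+1)) % 2 by
          have := i.isLt; omega)]
    · show G.omegaLevel v u l i.castSucc.val ⊆ G.omegaLevel u v l i.succ.val
      rw [Fin.coe_castSucc, Fin.val_succ, G.omegaLevel_thin v u (by omega : i.val ≤ l),
        G.omegaLevel_thin u v (by omega : i.val + 1 ≤ l),
        G.altSet_swap v u (show (l - i.val) % 2 ≠ (l - (i.val+1)) % 2 by
          have := i.isLt; omega)]
  · show G.Join (G.omegaLevel u v l (Fin.last l).val) (G.omegaLevel v u l (Fin.last l).val)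
    simp only [Fin.val_last]
    rw [G.omegaLevel_thin u v le_rfl, G.omegaLevel_thin v u le_rfl, Nat.sub_self]
    have h1 : G.altSet u v 0 = {u} := by unfold altSet; simp
    have h2 : G.altSet v u 0 = {v} := by unfold altSet; simp
    rw [h1, h2]
    exact G.join_single h

/-- The unit hom `G → Γ_{2l+1}(Ω_l(G))`. -/
theorem hom_unit (G : FinGraph) (l : ℕ) : G.Hom ((G.omega l).pow (2*l+1)) := by
  refine ⟨fun v => G.omegaA l v, ?_⟩
  intro u v h
  show (G.omega l).Walk (2*l+1) (G.omegaA l u) (G.omegaA l v)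
  refine ⟨fun s => if s ≤ l then G.omegaD l u v h s
    else G.omegaD l v u (G.symm h) (2*l+1 - s), ?_, ?_, ?_⟩
  · simp only [if_pos (by omega : 0 ≤ l)]
    exact G.omegaD_zero l u v h
  · simp only [if_neg (by omega : ¬ (2*l+1 ≤ l)), Nat.sub_self]
    exact G.omegaD_zero l v u (G.symm h)
  · intro i hi
    rcases lt_trichotomy i l with h1 | h1 | h1
    · simp only [if_pos (by omega : i ≤ l), if_pos (by omega : i + 1 ≤ l)]
      exact G.omegaD_step l h (by omega)
    · subst h1
      simp only [if_pos (le_refl i), if_neg (by omega : ¬ (i + 1 ≤ i)),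
        show 2*i+1 - (i+1) = i by omega]
      exact G.omegaD_mid i h
    · simp only [if_neg (by omega : ¬ (i ≤ l)), if_neg (by omega : ¬ (i + 1 ≤ l))]
      have := G.omegaD_step l (G.symm h) (t := 2*l+1 - (i+1)) (by omega)
      rw [show 2*l+1 - (i+1) + 1 = 2*l+1 - i by omega] at this
      exact (G.omega l).symm this

end FinGraph
namespace FinGraph

/-- Transpose: from `Γ_{2l+1}(G) → K` to `G → Ω_l(K)`. -/
theorem hom_omega_of_pow (G K : FinGraph) (l : ℕ) (h : (G.pow (2*l+1)).Hom K) :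
    G.Hom (K.omega l) := by
  obtain ⟨f, hf⟩ := h
  have hf' : ∀ {y z : G.V}, G.Walk (2*l+1) y z → K.Adj (f y) (f z) := fun hw => hf hw
  refine ⟨fun v => ⟨fun i => f '' {y | G.Walk i.val v y}, ⟨f v, ?_⟩, ?_⟩, ?_⟩
  · ext x
    simp only [Fin.val_zero, Set.mem_image, Set.mem_setOf_eq, Set.mem_singleton_iff]
    constructor
    · rintro ⟨y, hy, rfl⟩
      replace hy := walk_zero_iff.mp hy; rw [hy]
    · rintro rfl
      exact ⟨v, walk_zero v, rfl⟩
  · rintro i a ⟨y, hy, rfl⟩ b ⟨z, hz, rfl⟩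
    simp only [Set.mem_setOf_eq, Fin.coe_castSucc, Fin.val_succ] at hy hz
    have hw : G.Walk (i.val + (i.val + 1)) y z := hy.rev.trans hz
    have := i.isLt
    exact hf' (hw.pad (by omega) (by omega) (by omega))
  · intro u v huv
    constructor
    · intro i
      constructor
      · rintro a ⟨y, hy, rfl⟩
        exact ⟨y, by
          simp only [Set.mem_setOf_eq, Fin.coe_castSucc] at hy
          simp only [Set.mem_setOf_eq, Fin.val_succ]
          exact Walk.cons (G.symm huv) hy, rfl⟩
      · rintro a ⟨y, hy, rfl⟩
        exact ⟨y, by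
          simp only [Set.mem_setOf_eq, Fin.coe_castSucc] at hy
          simp only [Set.mem_setOf_eq, Fin.val_succ]
          exact Walk.cons huv hy, rfl⟩
    · rintro a ⟨y, hy, rfl⟩ b ⟨z, hz, rfl⟩
      simp only [Set.mem_setOf_eq, Fin.val_last] at hy hz
      have hw : G.Walk (l + (l + 1)) y z := hy.rev.trans (Walk.cons huv hz)
      rw [show l + (l + 1) = 2*l+1 by omega] at hw
      exact hf' hw

/-- The distinguished center of an `Ω`-vertex. -/
noncomputable def center {K : FinGraph} {l : ℕ} (A : (K.omega l).V) : K.V := A.2.1.choose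

theorem center_mem {K : FinGraph} {l : ℕ} (A : (K.omega l).V) : center A ∈ A.1 0 := by
  rw [A.2.1.choose_spec]; rfl

/-- Counit chain: endpoints of a `(2l+1)`-walk in `Ω_l(K)` have adjacent level-0 elements. -/
theorem omega_chain (K : FinGraph) (l : ℕ) (w : ℕ → (K.omega l).V)
    (hadj : ∀ i < 2*l+1, (K.omega l).Adj (w i) (w (i+1)))
    {a b : K.V} (ha : a ∈ (w 0).1 0) (hb : b ∈ (w (2*l+1)).1 0) : K.Adj a b := by
  have ha0 : a ∈ (w 0).1 ⟨0, by omega⟩ := by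
    have e : (w 0).1 0 = (w 0).1 ⟨0, by omega⟩ := by congr 1
    rwa [e] at ha
  have hb0 : b ∈ (w (2*l+1)).1 ⟨0, by omega⟩ := by
    have e : (w (2*l+1)).1 0 = (w (2*l+1)).1 ⟨0, by omega⟩ := by congr 1
    rwa [e] at hb
  have up : ∀ j, ∀ hj : j ≤ l, a ∈ (w j).1 ⟨j, by omega⟩ := by
    intro j
    induction j with
    | zero => intro _; exact ha0
    | succ n ih =>
      intro hj
      have h1 := ((hadj n (by omega)).1 ⟨n, by omega⟩).1
      have e1 : (⟨n, by omega⟩ : Fin l).castSucc = ⟨n, by omega⟩ := by ext; simp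
      have e2 : (⟨n, by omega⟩ : Fin l).succ = ⟨n+1, by omega⟩ := by ext; simp
      rw [e1, e2] at h1
      exact h1 (ih (by omega))
  have down : ∀ j, ∀ hj : j ≤ l, b ∈ (w (2*l+1 - j)).1 ⟨j, by omega⟩ := by
    intro j
    induction j with
    | zero => intro _; exact hb0
    | succ n ih =>
      intro hj
      have h1 := ((hadj (2*l - n) (by omega)).1 ⟨n, by omega⟩).2
      have e1 : (⟨n, by omega⟩ : Fin l).castSucc = ⟨n, by omega⟩ := by ext; simp
      have e2 : (⟨n, by omega⟩ : Fin l).succ = ⟨n+1, by omega⟩ := by ext; simp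
      rw [e1, e2] at h1
      have e3 : 2*l - n + 1 = 2*l+1 - n := by omega
      rw [e3] at h1
      have := h1 (ih (by omega))
      rwa [show 2*l - n = 2*l+1 - (n+1) by omega] at this
  have hu := up l le_rfl
  have hd := down l le_rfl
  have hjoin := (hadj l (by omega)).2
  have el : (Fin.last l) = (⟨l, by omega⟩ : Fin (l+1)) := by ext; simp
  rw [el] at hjoin
  rw [show 2*l+1 - l = l + 1 by omega] at hd
  exact hjoin a hu b hd

/-- Transpose: from `G → Ω_l(K)` to `Γ_{2l+1}(G) → K`. -/
theorem pow_hom_of_omega (G K : FinGraph) (l : ℕ) (h : G.Hom (K.omega l)) :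
    (G.pow (2*l+1)).Hom K := by
  obtain ⟨f, hf⟩ := h
  refine ⟨fun v => center (f v), ?_⟩
  intro u v huv
  obtain ⟨w, h0, hk, hadj⟩ := huv
  refine omega_chain K l (fun i => f (w i)) (fun i hi => hf (hadj i hi)) ?_ ?_
  · simp only [h0]; exact center_mem (f u)
  · simp only [hk]; exact center_mem (f v)

theorem prod_pow_hom (G H : FinGraph) (k : ℕ) :
    ((G.pow k).prod (H.pow k)).Hom ((G.prod H).pow k) := by
  refine ⟨fun p => p, ?_⟩
  rintro ⟨u1, u2⟩ ⟨v1, v2⟩ ⟨⟨w1, h10, h1k, h1adj⟩, ⟨w2, h20, h2k, h2adj⟩⟩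
  exact ⟨fun i => (w1 i, w2 i), by show (w1 0, w2 0) = _; rw [h10, h20]; rfl,
    by show (w1 k, w2 k) = _; rw [h1k, h2k]; rfl,
    fun i hi => ⟨h1adj i hi, h2adj i hi⟩⟩

theorem omega_prod_hom (G H : FinGraph) (l : ℕ) :
    ((G.omega l).prod (H.omega l)).Hom ((G.prod H).omega l) := by
  refine ⟨fun p => ⟨fun i => (p.1.1 i) ×ˢ (p.2.1 i), ?_, ?_⟩, ?_⟩
  · obtain ⟨a, ha⟩ := p.1.2.1
    obtain ⟨b, hb⟩ := p.2.2.1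
    exact ⟨(a, b), show (p.1.1 0) ×ˢ (p.2.1 0) = {(a, b)} by
      rw [ha, hb, Set.singleton_prod_singleton]⟩
  · intro i x hx y hy
    exact ⟨p.1.2.2 i x.1 hx.1 y.1 hy.1, p.2.2.2 i x.2 hx.2 y.2 hy.2⟩
  · rintro A B ⟨h1, h2⟩
    constructor
    · intro i
      exact ⟨Set.prod_mono ((h1.1 i).1) ((h2.1 i).1), Set.prod_mono ((h1.1 i).2) ((h2.1 i).2)⟩
    · intro x hx y hy
      exact ⟨h1.2 x.1 hx.1 y.1 hy.1, h2.2 x.2 hx.2 y.2 hy.2⟩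

/-- Functoriality of `Ω`. -/
theorem omega_hom (X K : FinGraph) (l : ℕ) (h : X.Hom K) : (X.omega l).Hom (K.omega l) :=
  hom_omega_of_pow _ _ _ ((pow_hom_of_omega (X.omega l) X l (Hom.id _)).trans h)

end FinGraph

/-- `K` is multiplicative iff `Ω_{2ℓ+1}(K)` is multiplicative. -/
theorem multiplicative_iff_omega_multiplicative (l : ℕ) (K : FinGraph) :
    K.Multiplicative ↔ (K.omega l).Multiplicative := by
  constructor
  · intro hK G H hGH
    have h1 : ((G.prod H).pow (2*l+1)).Hom K := FinGraph.pow_hom_of_omega _ _ _ hGH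
    have h2 : ((G.pow (2*l+1)).prod (H.pow (2*l+1))).Hom K :=
      (FinGraph.prod_pow_hom G H (2*l+1)).trans h1
    rcases hK _ _ h2 with h | h
    · exact Or.inl (FinGraph.hom_omega_of_pow _ _ _ h)
    · exact Or.inr (FinGraph.hom_omega_of_pow _ _ _ h)
  · intro hO G H hGH
    have c1 := FinGraph.omega_hom _ _ l hGH
    have c2 := (FinGraph.omega_prod_hom G H l).trans c1
    have key : ∀ X : FinGraph, (X.omega l).Hom (K.omega l) → X.Hom K := fun X f =>
      (FinGraph.hom_unit X l).trans (FinGraph.pow_hom_of_omega _ _ _ f)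
    rcases hO _ _ c2 with h | h
    · exact Or.inl (key G h)
    · exact Or.inr (key H h)
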